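/- Fundamental theorem of Hopf modules: for a Hopf algebra H over a field k, the functor V ↦ V ⊗ H from k-vector spaces to right-right Hopf modules over H is an equivalence of categories, with quasi-inverse the coinvariants functor M ↦ M^{coH} = {m ∈ M : ρ(m) = m ⊗ 1}. In particular, every Hopf module M is isomorphic to M^{coH} ⊗ H as a Hopf module. -/

import Mathlib

open TensorProduct Coalgebra


section Frozen

variable (k H M : Type*)

section HopfModule

variable [Field k] [Ring H] [HopfAlgebra k H] [AddCommGroup M] [Module k M]

/-- The right `H`-action on `M ⊗ H` given by `(v ⊗ g)·h = v ⊗ gh`, for any `k`-space `W`,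
as a map `(W ⊗ H) ⊗ H → W ⊗ H`. -/
noncomputable def freeAct (W : Type*) [AddCommGroup W] [Module k W] :
    (W ⊗[k] H) ⊗[k] H →ₗ[k] W ⊗[k] H :=
  TensorProduct.map LinearMap.id (LinearMap.mul' k H)
    ∘ₗ (TensorProduct.assoc k W H H).toLinearMap

/-- The right `H`-coaction on `W ⊗ H` given by `id ⊗ Δ`, as a map `W ⊗ H → (W ⊗ H) ⊗ H`. -/
noncomputable def freeCoact (W : Type*) [AddCommGroup W] [Module k W] :
    W ⊗[k] H →ₗ[k] (W ⊗[k] H) ⊗[k] H :=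
  (TensorProduct.assoc k W H H).symm.toLinearMap
    ∘ₗ TensorProduct.map LinearMap.id Coalgebra.comul

end HopfModule

end Frozen

section Conv

variable {k B H : Type*} [CommSemiring k] [Semiring H] [Bialgebra k H]
  [Semiring B] [Algebra k B]

/-- Convolution product on `H →ₗ[k] B`. -/
noncomputable def conv (f g : H →ₗ[k] B) : H →ₗ[k] B :=
  LinearMap.mul' k B ∘ₗ TensorProduct.map f g ∘ₗ Coalgebra.comul

/-- The convolution unit. -/
noncomputable def convUnit : H →ₗ[k] B :=
  Algebra.linearMap k B ∘ₗ Coalgebra.counit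

lemma conv_repr (f g : H →ₗ[k] B) {a : H} {ι : Type*} (r : Coalgebra.Repr k a ι) :
    conv f g a = ∑ i ∈ r.index, f (r.left i) * g (r.right i) := by
  simp [conv, ← r.eq, map_sum]

lemma conv_assoc (f g h : H →ₗ[k] B) : conv (conv f g) h = conv f (conv g h) := by
  ext a
  set r := ℛ k a with hr
  set rl : (i : r.ι) → Repr k (r.left i) (H × H) := fun i => ℛ k (r.left i) with hrl
  set rr : (i : r.ι) → Repr k (r.right i) (H × H) := fun i => ℛ k (r.right i) with hrr
  have key := Coalgebra.sum_tmul_tmul_eq r rl rr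
  set L : H ⊗[k] (H ⊗[k] H) →ₗ[k] B :=
    LinearMap.mul' k B ∘ₗ TensorProduct.map f (LinearMap.mul' k B ∘ₗ TensorProduct.map g h)
    with hL
  have hLa : ∀ x y z : H, L (x ⊗ₜ (y ⊗ₜ z)) = f x * (g y * h z) := by
    intro x y z; simp [hL]
  have := congrArg L key
  simp only [map_sum, hLa] at this
  calc conv (conv f g) h a
      = ∑ i ∈ r.index, (∑ j ∈ (rl i).index, f ((rl i).left j) * g ((rl i).right j)) * h (r.right i) := by
        rw [conv_repr _ _ r]
        exact Finset.sum_congr rfl fun i _ => by rw [conv_repr _ _ (rl i)]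
    _ = ∑ i ∈ r.index, ∑ j ∈ (rl i).index, f ((rl i).left j) * (g ((rl i).right j) * h (r.right i)) := by
        simp [Finset.sum_mul, mul_assoc]
    _ = ∑ i ∈ r.index, ∑ j ∈ (rr i).index, f (r.left i) * (g ((rr i).left j) * h ((rr i).right j)) := this
    _ = conv f (conv g h) a := by
        rw [conv_repr _ _ r]
        refine (Finset.sum_congr rfl fun i _ => ?_).symm
        rw [conv_repr _ _ (rr i), Finset.mul_sum]

lemma conv_unit_right (f : H →ₗ[k] B) : conv f convUnit = f := by
  ext a
  set r := ℛ k a with hr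
  have key := Coalgebra.sum_tmul_counit_eq r
  have := congrArg (TensorProduct.rid k H) key
  simp only [map_sum, TensorProduct.rid_tmul] at this
  rw [conv_repr _ _ r]
  calc ∑ i ∈ r.index, f (r.left i) * convUnit (r.right i)
      = ∑ i ∈ r.index, f (Coalgebra.counit (R := k) (r.right i) • r.left i) := by
        refine Finset.sum_congr rfl fun i _ => ?_
        rw [map_smul]
        simp [convUnit, Algebra.smul_def, Algebra.commutes]
    _ = f a := by rw [← map_sum, this, one_smul]

lemma conv_unit_left (f : H →ₗ[k] B) : conv convUnit f = f := by
  ext a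
  set r := ℛ k a with hr
  have key := Coalgebra.sum_counit_tmul_eq r
  have := congrArg (TensorProduct.lid k H) key
  simp only [map_sum, TensorProduct.lid_tmul] at this
  rw [conv_repr _ _ r]
  calc ∑ i ∈ r.index, convUnit (r.left i) * f (r.right i)
      = ∑ i ∈ r.index, f (Coalgebra.counit (R := k) (r.left i) • r.right i) := by
        refine Finset.sum_congr rfl fun i _ => ?_
        rw [map_smul]
        simp [convUnit, Algebra.smul_def]
    _ = f a := by rw [← map_sum, this, one_smul]

lemma conv_inv_unique {f g g' : H →ₗ[k] B} (h1 : conv g f = convUnit)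
    (h2 : conv f g' = convUnit) : g = g' := by
  have : conv g (conv f g') = conv (conv g f) g' := (conv_assoc g f g').symm
  rw [h1, h2, conv_unit_right, conv_unit_left] at this
  exact this

end Conv

section Anti

variable {k H : Type*} [CommSemiring k] [Semiring H] [HopfAlgebra k H]

local notation "S" => HopfAlgebra.antipode (R := k) (A := H)

noncomputable def Nmap (w : H) : H ⊗[k] (H ⊗[k] H) →ₗ[k] H ⊗[k] H :=
  TensorProduct.map (LinearMap.mul' k H ∘ₗ LinearMap.rTensor H S) (LinearMap.mulLeft k w)
    ∘ₗ (TensorProduct.assoc k H H H).symm.toLinearMap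

lemma Nmap_tmul (w y : H) (t : H ⊗[k] H) :
    Nmap (k := k) w (y ⊗ₜ t) = ((S) y ⊗ₜ[k] w) * t := by
  induction t using TensorProduct.induction_on with
  | zero => simp [Nmap]
  | tmul z₁ z₂ => simp [Nmap, Algebra.TensorProduct.tmul_mul_tmul]
  | add x y' hx hy => simp [tmul_add, mul_add, hx, hy]

lemma Nmap_comul (w b : H) :
    Nmap (k := k) w (LinearMap.lTensor H Coalgebra.comul (Coalgebra.comul b))
      = 1 ⊗ₜ[k] (w * b) := by
  rw [← Coalgebra.coassoc_apply]
  simp only [Nmap, LinearMap.comp_apply, LinearEquiv.coe_coe, LinearEquiv.symm_apply_apply]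
  rw [← LinearMap.comp_apply, LinearMap.map_comp_rTensor, LinearMap.comp_assoc,
    HopfAlgebra.mul_antipode_rTensor_comul, ← LinearMap.map_comp_rTensor,
    LinearMap.comp_apply]
  rw [show (LinearMap.rTensor H (Coalgebra.counit (R := k))) (Coalgebra.comul b)
      = (1 : k) ⊗ₜ[k] b from Coalgebra.rTensor_counit_comul b]
  simp


local notation "Δ" => (Coalgebra.comul : H →ₗ[k] H ⊗[k] H)

lemma conv_comul_comulAntipode :
    conv (Δ) ((Δ) ∘ₗ (S)) = convUnit := by
  ext a
  set r := ℛ k a with hr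
  rw [conv_repr _ _ r]
  have step : ∀ i, (Δ) (r.left i) * ((Δ) ∘ₗ (S)) (r.right i)
      = Bialgebra.comulAlgHom k H (r.left i * (S) (r.right i)) := by
    intro i; simp [Bialgebra.comul_mul]
  rw [Finset.sum_congr rfl fun i _ => step i, ← map_sum,
    HopfAlgebra.sum_mul_antipode_eq_algebraMap_counit r, AlgHom.commutes]
  simp [convUnit]

lemma conv_antiSS_comul :
    conv ((TensorProduct.comm k H H).toLinearMap ∘ₗ TensorProduct.map (S) (S) ∘ₗ (Δ))
      (Δ) = convUnit := by
  ext a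
  set g : H →ₗ[k] H ⊗[k] H :=
    (TensorProduct.comm k H H).toLinearMap ∘ₗ TensorProduct.map (S) (S) ∘ₗ (Δ) with hg
  set r := ℛ k a with hr
  set rl : (i : r.ι) → Repr k (r.left i) (H × H) := fun i => ℛ k (r.left i) with hrl
  set rr : (i : r.ι) → Repr k (r.right i) (H × H) := fun i => ℛ k (r.right i) with hrr
  have key := Coalgebra.sum_tmul_tmul_eq r rl rr
  set Φ : H ⊗[k] (H ⊗[k] H) →ₗ[k] H ⊗[k] H :=
    LinearMap.mul' k (H ⊗[k] H)
      ∘ₗ TensorProduct.map ((TensorProduct.comm k H H).toLinearMap ∘ₗ TensorProduct.map (S) (S))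
          (Δ)
      ∘ₗ (TensorProduct.assoc k H H H).symm.toLinearMap with hΦ
  have hΦa : ∀ x y z : H, Φ (x ⊗ₜ (y ⊗ₜ z)) = ((S) y ⊗ₜ[k] (S) x) * (Δ) z := by
    intro x y z; simp [hΦ]
  have lhs_eq : conv g (Δ) a = Φ (∑ i ∈ r.index, ∑ j ∈ (rl i).index,
      (rl i).left j ⊗ₜ[k] ((rl i).right j ⊗ₜ[k] r.right i)) := by
    rw [conv_repr _ _ r, map_sum]
    refine Finset.sum_congr rfl fun i _ => ?_
    rw [map_sum]
    have hgi : g (r.left i) = ∑ j ∈ (rl i).index, (S) ((rl i).right j) ⊗ₜ[k] (S) ((rl i).left j) := by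
      rw [hg]
      simp only [LinearMap.comp_apply, ← (rl i).eq, map_sum, TensorProduct.map_tmul,
        LinearEquiv.coe_coe, TensorProduct.comm_tmul]
    rw [hgi, Finset.sum_mul]
    exact Finset.sum_congr rfl fun j _ => (hΦa _ _ _).symm
  rw [lhs_eq, key, map_sum]
  have inner : ∀ i, Φ (∑ p ∈ (rr i).index, r.left i ⊗ₜ[k] ((rr i).left p ⊗ₜ[k] (rr i).right p))
      = 1 ⊗ₜ[k] ((S) (r.left i) * r.right i) := by
    intro i
    rw [map_sum]
    have e1 : ∀ p, Φ (r.left i ⊗ₜ[k] ((rr i).left p ⊗ₜ[k] (rr i).right p))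
        = Nmap (k := k) ((S) (r.left i)) ((rr i).left p ⊗ₜ[k] (Δ) ((rr i).right p)) := by
      intro p; rw [hΦa, Nmap_tmul]
    rw [Finset.sum_congr rfl fun p _ => e1 p, ← map_sum]
    have e2 : (∑ p ∈ (rr i).index, (rr i).left p ⊗ₜ[k] (Δ) ((rr i).right p))
        = LinearMap.lTensor H (Δ) ((Δ) (r.right i)) := by
      rw [← (rr i).eq, map_sum]
      simp [LinearMap.lTensor_tmul]
    rw [e2, Nmap_comul]
  rw [Finset.sum_congr rfl fun i _ => inner i, ← TensorProduct.tmul_sum,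
    HopfAlgebra.sum_antipode_mul_eq_algebraMap_counit r]
  simp [convUnit, Algebra.TensorProduct.algebraMap_apply, Algebra.algebraMap_eq_smul_one,
    Algebra.TensorProduct.one_def, TensorProduct.tmul_smul, TensorProduct.smul_tmul']

lemma comul_comp_antipode :
    (Δ) ∘ₗ (S) = (TensorProduct.comm k H H).toLinearMap ∘ₗ TensorProduct.map (S) (S) ∘ₗ (Δ) :=
  (conv_inv_unique conv_antiSS_comul conv_comul_comulAntipode).symm

end Anti


section HM

variable {k H M : Type*} [Field k] [Ring H] [HopfAlgebra k H] [AddCommGroup M] [Module k M]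
variable (μ : M ⊗[k] H →ₗ[k] M) (ρ : M →ₗ[k] M ⊗[k] H)

local notation "Sa" => (HopfAlgebra.antipode (R := k) (A := H))
local notation "Δ" => (Coalgebra.comul (R := k) (A := H))
local notation "ε" => (Coalgebra.counit (R := k) (A := H))

/-- The canonical projection `m ↦ Σ m₀ · S(m₁)`. -/
noncomputable def Pmap : M →ₗ[k] M := μ ∘ₗ ((Sa).lTensor M ∘ₗ ρ)

variable {μ ρ}

section lemmas

variable (hμ_one : ∀ m : M, μ (m ⊗ₜ[k] 1) = m)
  (hμ_assoc : ∀ (m : M) (g h : H), μ (μ (m ⊗ₜ[k] g) ⊗ₜ[k] h) = μ (m ⊗ₜ[k] (g * h)))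
  (hρ_counit : (TensorProduct.rid k M).toLinearMap
      ∘ₗ TensorProduct.map LinearMap.id Coalgebra.counit ∘ₗ ρ = LinearMap.id)
  (hρ_coassoc : TensorProduct.map ρ LinearMap.id ∘ₗ ρ =
    (TensorProduct.assoc k M H H).symm.toLinearMap
      ∘ₗ TensorProduct.map LinearMap.id Coalgebra.comul ∘ₗ ρ)
  (hcompat : ρ ∘ₗ μ =
    TensorProduct.map μ (LinearMap.mul' k H)
      ∘ₗ (TensorProduct.tensorTensorTensorComm k M H H H).toLinearMap
      ∘ₗ TensorProduct.map ρ Coalgebra.comul)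

include hρ_coassoc in
lemma hcoassoc' : (ρ.rTensor H) ∘ₗ ρ =
    (TensorProduct.assoc k M H H).symm.toLinearMap ∘ₗ ((Δ).lTensor M ∘ₗ ρ) :=
  hρ_coassoc

include hρ_counit in
lemma hcounit' : (ε).lTensor M ∘ₗ ρ = (TensorProduct.rid k M).symm.toLinearMap := by
  apply LinearMap.ext
  intro m
  have h := LinearMap.congr_fun hρ_counit m
  simp only [LinearMap.comp_apply, LinearMap.id_apply, LinearEquiv.coe_coe] at h ⊢
  rw [LinearEquiv.eq_symm_apply]
  exact h

include hμ_assoc in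
lemma hμA : μ ∘ₗ μ.rTensor H = μ ∘ₗ (LinearMap.mul' k H).lTensor M
    ∘ₗ (TensorProduct.assoc k M H H).toLinearMap := by
  ext m g h
  simp [hμ_assoc]

include hμ_one hμ_assoc hρ_counit hρ_coassoc in
/-- `Σ P(m₀)·m₁ = m`. -/
lemma G2 : μ ∘ₗ (Pmap μ ρ).rTensor H ∘ₗ ρ = LinearMap.id := by
  have hco := hcoassoc' hρ_coassoc
  have hcu := hcounit' hρ_counit
  have hA := hμA hμ_assoc
  apply LinearMap.ext
  intro m
  simp only [LinearMap.comp_apply, LinearMap.id_apply]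
  rw [Pmap, LinearMap.rTensor_comp, LinearMap.rTensor_comp]
  simp only [LinearMap.comp_apply]
  have h1 := LinearMap.congr_fun hco m
  simp only [LinearMap.comp_apply, LinearEquiv.coe_coe] at h1
  rw [h1]
  -- naturality of assoc
  have nat1 : ((Sa).lTensor M).rTensor H ∘ₗ (TensorProduct.assoc k M H H).symm.toLinearMap
      = (TensorProduct.assoc k M H H).symm.toLinearMap ∘ₗ ((Sa).rTensor H).lTensor M := by
    ext m' x y
    simp
  have h2 := LinearMap.congr_fun nat1 ((Δ).lTensor M (ρ m))
  simp only [LinearMap.comp_apply, LinearEquiv.coe_coe] at h2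
  rw [h2]
  have h3 := LinearMap.congr_fun hA
    ((TensorProduct.assoc k M H H).symm (((Sa).rTensor H).lTensor M ((Δ).lTensor M (ρ m))))
  simp only [LinearMap.comp_apply, LinearEquiv.coe_coe, LinearEquiv.apply_symm_apply] at h3
  rw [h3]
  rw [← LinearMap.lTensor_comp_apply, ← LinearMap.lTensor_comp_apply, LinearMap.comp_assoc,
    HopfAlgebra.mul_antipode_rTensor_comul]
  rw [LinearMap.lTensor_comp, LinearMap.comp_apply]
  have h4 := LinearMap.congr_fun hcu m
  simp only [LinearMap.comp_apply, LinearEquiv.coe_coe] at h4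
  rw [h4, TensorProduct.rid_symm_apply, LinearMap.lTensor_tmul]
  simp [hμ_one m]

include hρ_coassoc hcompat in
/-- `P` lands in the coinvariants: `ρ(P m) = P m ⊗ 1`. -/
lemma G1 : ρ ∘ₗ Pmap μ ρ = (TensorProduct.mk k M H).flip 1 ∘ₗ Pmap μ ρ := by
  have hco := hcoassoc' hρ_coassoc
  apply LinearMap.ext
  intro m
  simp only [LinearMap.comp_apply]
  have hPm : Pmap μ ρ m = μ ((Sa).lTensor M (ρ m)) := rfl
  rw [hPm]
  have h0 := LinearMap.congr_fun hcompat ((Sa).lTensor M (ρ m))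
  simp only [LinearMap.comp_apply, LinearEquiv.coe_coe] at h0
  rw [h0, ← LinearMap.comp_apply (TensorProduct.map ρ Coalgebra.comul),
    LinearMap.map_comp_lTensor, comul_comp_antipode,
    ← LinearMap.comp_assoc, ← LinearMap.lTensor_comp_map]
  simp only [LinearMap.comp_apply]
  rw [← LinearMap.lTensor_comp_rTensor (f := ρ) (g := (Δ)), LinearMap.comp_apply]
  have h1 := LinearMap.congr_fun hco m
  simp only [LinearMap.comp_apply, LinearEquiv.coe_coe] at h1
  rw [h1]
  have nat2 : (Δ).lTensor (M ⊗[k] H) ∘ₗ (TensorProduct.assoc k M H H).symm.toLinearMap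
      = (TensorProduct.assoc k M H (H ⊗[k] H)).symm.toLinearMap
        ∘ₗ ((Δ).lTensor H).lTensor M := by
    ext m' x y
    simp
  have h2 := LinearMap.congr_fun nat2 ((Δ).lTensor M (ρ m))
  simp only [LinearMap.comp_apply, LinearEquiv.coe_coe] at h2
  rw [h2, ← LinearMap.lTensor_comp_apply]
  have hcoH : (Δ).lTensor H ∘ₗ (Δ)
      = (TensorProduct.assoc k H H H).toLinearMap ∘ₗ ((Δ).rTensor H ∘ₗ (Δ)) :=
    (Coalgebra.coassoc (R := k) (A := H)).symm
  rw [hcoH, LinearMap.lTensor_comp, LinearMap.lTensor_comp]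
  simp only [LinearMap.comp_apply]
  set X : M ⊗[k] (H ⊗[k] H) →ₗ[k] M ⊗[k] H :=
    TensorProduct.map (μ ∘ₗ (Sa).lTensor M) LinearMap.id
      ∘ₗ (TensorProduct.assoc k M H H).symm.toLinearMap
      ∘ₗ ((TensorProduct.comm k H H).toLinearMap).lTensor M with hX
  have claimC : ∀ z : M ⊗[k] ((H ⊗[k] H) ⊗[k] H),
      (TensorProduct.map μ (LinearMap.mul' k H))
        ((TensorProduct.tensorTensorTensorComm k M H H H)
          ((((TensorProduct.comm k H H).toLinearMap).lTensor (M ⊗[k] H))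
            (((TensorProduct.map (Sa) (Sa)).lTensor (M ⊗[k] H))
              ((TensorProduct.assoc k M H (H ⊗[k] H)).symm
                ((((TensorProduct.assoc k H H H).toLinearMap).lTensor M) z)))))
        = X ((((LinearMap.mul' k H ∘ₗ (Sa).lTensor H).rTensor H).lTensor M) z) := by
    intro z
    induction z using TensorProduct.induction_on with
    | zero => simp
    | add a b ha hb => simp only [map_add, ha, hb]
    | tmul m' w =>
      induction w using TensorProduct.induction_on with
      | zero => simp [TensorProduct.tmul_zero]
      | add a b ha hb => simp only [TensorProduct.tmul_add, map_add, ha, hb]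
      | tmul w' h₃ =>
        induction w' using TensorProduct.induction_on with
        | zero => simp [TensorProduct.zero_tmul, TensorProduct.tmul_zero]
        | add a b ha hb => simp only [TensorProduct.add_tmul, TensorProduct.tmul_add,
            map_add, ha, hb]
        | tmul h₁ h₂ =>
          simp [hX, TensorProduct.assoc_symm_tmul]
  rw [claimC, ← LinearMap.lTensor_comp_apply]
  have hchain : ((LinearMap.mul' k H ∘ₗ (Sa).lTensor H).rTensor H) ∘ₗ ((Δ).rTensor H ∘ₗ (Δ))
      = TensorProduct.mk k H H 1 := by
    rw [← LinearMap.comp_assoc, ← LinearMap.rTensor_comp, LinearMap.comp_assoc,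
      HopfAlgebra.mul_antipode_lTensor_comul, LinearMap.rTensor_comp, LinearMap.comp_assoc,
      Coalgebra.rTensor_counit_comp_comul]
    apply LinearMap.ext
    intro h'
    simp
  rw [hchain]
  have final : ∀ w : M ⊗[k] H,
      X ((TensorProduct.mk k H H 1).lTensor M w) = (μ ((Sa).lTensor M w)) ⊗ₜ[k] (1 : H) := by
    intro w
    induction w using TensorProduct.induction_on with
    | zero => simp
    | add a b ha hb => simp only [map_add, ha, hb, TensorProduct.add_tmul]
    | tmul m' h' => simp [hX, TensorProduct.assoc_symm_tmul]
  rw [final]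
  simp [hPm]

include hcompat in
/-- For a coinvariant `v`, `ρ(v·h) = Σ v·h₁ ⊗ h₂`. -/
lemma G3 (v : M) (hv : ρ v = v ⊗ₜ[k] 1) :
    ρ ∘ₗ (μ ∘ₗ TensorProduct.mk k M H v)
      = (μ ∘ₗ TensorProduct.mk k M H v).rTensor H ∘ₗ (Δ) := by
  have helper : (TensorProduct.map μ (LinearMap.mul' k H))
      ∘ₗ (TensorProduct.tensorTensorTensorComm k M H H H).toLinearMap
      ∘ₗ TensorProduct.mk k (M ⊗[k] H) (H ⊗[k] H) (v ⊗ₜ[k] 1)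
      = (μ ∘ₗ TensorProduct.mk k M H v).rTensor H := by
    apply TensorProduct.ext'
    intro x y
    simp [TensorProduct.tensorTensorTensorComm_tmul]
  apply LinearMap.ext
  intro h
  simp only [LinearMap.comp_apply, TensorProduct.mk_apply]
  have h0 := LinearMap.congr_fun hcompat (v ⊗ₜ[k] h)
  simp only [LinearMap.comp_apply, LinearEquiv.coe_coe, TensorProduct.map_tmul] at h0
  rw [h0, hv]
  have h1 := LinearMap.congr_fun helper ((Δ) h)
  simp only [LinearMap.comp_apply, LinearEquiv.coe_coe, TensorProduct.mk_apply] at h1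
  exact h1

include hμ_one hμ_assoc hcompat in
/-- For a coinvariant `v`, `P(v·g) = ε(g) • v`. -/
lemma G4 (v : M) (hv : ρ v = v ⊗ₜ[k] 1) (g : H) :
    Pmap μ ρ (μ (v ⊗ₜ[k] g)) = Coalgebra.counit (R := k) g • v := by
  have hg3 := LinearMap.congr_fun (G3 hcompat v hv) g
  simp only [LinearMap.comp_apply, TensorProduct.mk_apply] at hg3
  have h0 : Pmap μ ρ (μ (v ⊗ₜ[k] g)) = μ ((Sa).lTensor M (ρ (μ (v ⊗ₜ[k] g)))) := rfl
  rw [h0, hg3]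
  have helper : μ ∘ₗ ((Sa).lTensor M) ∘ₗ ((μ ∘ₗ TensorProduct.mk k M H v).rTensor H)
      = (μ ∘ₗ TensorProduct.mk k M H v) ∘ₗ (LinearMap.mul' k H) ∘ₗ ((Sa).lTensor H) := by
    apply TensorProduct.ext'
    intro x y
    simp [hμ_assoc]
  have h2 := LinearMap.congr_fun helper ((Δ) g)
  simp only [LinearMap.comp_apply, TensorProduct.mk_apply] at h2
  rw [h2, HopfAlgebra.mul_antipode_lTensor_comul_apply, Algebra.algebraMap_eq_smul_one,
    TensorProduct.tmul_smul, map_smul, hμ_one]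

end lemmas

end HM

variable (k H M : Type*)

section HopfModule

variable [Field k] [Ring H] [HopfAlgebra k H] [AddCommGroup M] [Module k M]

/-- Fundamental theorem of Hopf modules: let `H` be a Hopf algebra over a field `k` and let
`M` be a (right,right) Hopf module over `H`, i.e. a right `H`-module (action `μ`), a right
`H`-comodule (coaction `ρ`), satisfying the Hopf module compatibility
`ρ(m·h) = Σ m₀·h₁ ⊗ m₁h₂`.  Then `M` is isomorphic, as a Hopf module, to
`M^{coH} ⊗ H` where `M^{coH} = {m : ρ(m) = m ⊗ 1}` is the space of coinvariants: there is
a `k`-linear equivalence `M^{coH} ⊗ H ≃ M` commuting with the `H`-actions and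
`H`-coactions (where `M^{coH} ⊗ H` carries the action `(v ⊗ g)·h = v ⊗ gh` and the
coaction `id ⊗ Δ`).  Since `M` ranges over all Hopf modules, the functor
`V ↦ V ⊗ H` is an equivalence onto the category of Hopf modules, with quasi-inverse the
coinvariants functor. -/
theorem fundamental_theorem_of_hopf_modules
    (μ : M ⊗[k] H →ₗ[k] M) (ρ : M →ₗ[k] M ⊗[k] H)
    -- `μ` is a unital associative right action:
    (hμ_one : ∀ m : M, μ (m ⊗ₜ[k] 1) = m)
    (hμ_assoc : ∀ (m : M) (g h : H), μ (μ (m ⊗ₜ[k] g) ⊗ₜ[k] h) = μ (m ⊗ₜ[k] (g * h)))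
    -- `ρ` is a counital coassociative coaction:
    (hρ_counit : (TensorProduct.rid k M).toLinearMap
        ∘ₗ TensorProduct.map LinearMap.id Coalgebra.counit ∘ₗ ρ = LinearMap.id)
    (hρ_coassoc : TensorProduct.map ρ LinearMap.id ∘ₗ ρ =
      (TensorProduct.assoc k M H H).symm.toLinearMap
        ∘ₗ TensorProduct.map LinearMap.id Coalgebra.comul ∘ₗ ρ)
    -- Hopf module compatibility `ρ ∘ μ = (μ ⊗ m) ∘ (23-swap) ∘ (ρ ⊗ Δ)`:
    (hcompat : ρ ∘ₗ μ =
      TensorProduct.map μ (LinearMap.mul' k H)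
        ∘ₗ (TensorProduct.tensorTensorTensorComm k M H H H).toLinearMap
        ∘ₗ TensorProduct.map ρ Coalgebra.comul) :
    ∀ coinv : Submodule k M,
      coinv = LinearMap.ker (ρ - (TensorProduct.mk k M H).flip 1) →
      ∃ e : (↥coinv ⊗[k] H) ≃ₗ[k] M,
        -- `e` is a morphism of right `H`-modules:
        (e.toLinearMap ∘ₗ freeAct k H (↥coinv) =
          μ ∘ₗ TensorProduct.map e.toLinearMap LinearMap.id) ∧
        -- `e` is a morphism of right `H`-comodules:
        (ρ ∘ₗ e.toLinearMap =
          TensorProduct.map e.toLinearMap LinearMap.id ∘ₗ freeCoact k H (↥coinv)) := by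
  intro coinv hc
  have hmem : ∀ m : M, Pmap μ ρ m ∈ coinv := by
    intro m
    rw [hc, LinearMap.mem_ker, LinearMap.sub_apply]
    have h1 := LinearMap.congr_fun (G1 hρ_coassoc hcompat) m
    simp only [LinearMap.comp_apply] at h1
    rw [h1]
    simp
  have hv_co : ∀ v : coinv, ρ (v : M) = (v : M) ⊗ₜ[k] 1 := by
    intro v
    have h : (v : M) ∈ LinearMap.ker (ρ - (TensorProduct.mk k M H).flip 1) := by
      rw [← hc]; exact v.2
    rw [LinearMap.mem_ker, LinearMap.sub_apply] at h
    have := sub_eq_zero.mp h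
    simpa using this
  set P' : M →ₗ[k] ↥coinv := (Pmap μ ρ).codRestrict coinv hmem with hP'
  set β : ↥coinv ⊗[k] H →ₗ[k] M := μ ∘ₗ (coinv.subtype).rTensor H with hβ
  set φ : M →ₗ[k] ↥coinv ⊗[k] H := P'.rTensor H ∘ₗ ρ with hφ
  have hβv : ∀ (v : coinv) (h : H), β (v ⊗ₜ[k] h) = μ ((v : M) ⊗ₜ[k] h) := by
    intro v h
    simp [hβ]
  have hβφ : β ∘ₗ φ = LinearMap.id := by
    have e1 : β ∘ₗ φ = μ ∘ₗ ((Pmap μ ρ).rTensor H ∘ₗ ρ) := by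
      apply LinearMap.ext
      intro m
      simp only [hβ, hφ, LinearMap.comp_apply]
      rw [← LinearMap.rTensor_comp_apply, LinearMap.subtype_comp_codRestrict]
    rw [e1, ← LinearMap.comp_assoc]
    exact G2 hμ_one hμ_assoc hρ_counit hρ_coassoc
  have hφβ : φ ∘ₗ β = LinearMap.id := by
    apply TensorProduct.ext'
    intro v h
    simp only [LinearMap.comp_apply, LinearMap.id_apply]
    rw [hβv v h]
    have hg3 := LinearMap.congr_fun (G3 hcompat (v : M) (hv_co v)) h
    simp only [LinearMap.comp_apply, TensorProduct.mk_apply] at hg3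
    rw [hφ]
    simp only [LinearMap.comp_apply]
    rw [hg3, ← LinearMap.rTensor_comp_apply]
    have hP'α : P' ∘ₗ (μ ∘ₗ TensorProduct.mk k M H (v : M))
        = LinearMap.toSpanSingleton k (↥coinv) v ∘ₗ (Coalgebra.counit (R := k) (A := H)) := by
      apply LinearMap.ext
      intro g
      apply Subtype.ext
      simp only [LinearMap.comp_apply, TensorProduct.mk_apply,
        LinearMap.toSpanSingleton_apply, hP', LinearMap.codRestrict_apply]
      rw [G4 hμ_one hμ_assoc hcompat (v : M) (hv_co v) g]
      simp
    rw [hP'α, LinearMap.rTensor_comp, LinearMap.comp_apply]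
    rw [show (LinearMap.rTensor H (Coalgebra.counit (R := k) (A := H)))
        (Coalgebra.comul h) = (1 : k) ⊗ₜ[k] h from Coalgebra.rTensor_counit_comul h]
    simp
  refine ⟨LinearEquiv.ofLinear β φ hβφ hφβ, ?_, ?_⟩
  · show β ∘ₗ freeAct k H (↥coinv) = μ ∘ₗ TensorProduct.map β LinearMap.id
    apply TensorProduct.ext_threefold
    intro v g h
    simp [freeAct, hβv, hμ_assoc]
  · show ρ ∘ₗ β = TensorProduct.map β LinearMap.id ∘ₗ freeCoact k H (↥coinv)
    apply TensorProduct.ext'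
    intro v h
    simp only [freeCoact, LinearMap.comp_apply, LinearEquiv.coe_coe, TensorProduct.map_tmul,
      TensorProduct.mk_apply]
    rw [hβv v h]
    have hg3 := LinearMap.congr_fun (G3 hcompat (v : M) (hv_co v)) h
    simp only [LinearMap.comp_apply, TensorProduct.mk_apply] at hg3
    rw [hg3]
    have helper : (TensorProduct.map β LinearMap.id)
        ∘ₗ (TensorProduct.assoc k (↥coinv) H H).symm.toLinearMap
        ∘ₗ TensorProduct.mk k (↥coinv) (H ⊗[k] H) v
        = (μ ∘ₗ TensorProduct.mk k M H (v : M)).rTensor H := by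
      apply TensorProduct.ext'
      intro x y
      simp [TensorProduct.assoc_symm_tmul, hβv]
    have h2 := LinearMap.congr_fun helper (Coalgebra.comul h)
    simp only [LinearMap.comp_apply, LinearEquiv.coe_coe, TensorProduct.mk_apply] at h2
    rw [← h2]
    simp


end HopfModule
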